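/- (Tsirelson's bound, operator form) Let A₀, A₁, B₀, B₁ be self-adjoint operators on finite-dimensional Hilbert spaces H_A, H_B with Aᵢ² ≤ I and Bⱼ² ≤ I. Then the CHSH operator A₀⊗B₀ + A₀⊗B₁ + A₁⊗B₀ − A₁⊗B₁ satisfies −2√2·I ≤ A₀⊗B₀ + A₀⊗B₁ + A₁⊗B₀ − A₁⊗B₁ ≤ 2√2·I. -/

import Mathlib

open Matrix Kronecker ComplexOrder

set_option linter.unusedSectionVars false

section helpers
variable {m n : Type*} [Fintype m] [Fintype n] [DecidableEq m] [DecidableEq n]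

lemma kron_conjT (A : Matrix m m ℂ) (B : Matrix n n ℂ) : (A ⊗ₖ B)ᴴ = Aᴴ ⊗ₖ Bᴴ := by
  ext ⟨i,j⟩ ⟨k,l⟩
  simp [conjTranspose_apply, kroneckerMap_apply, star_mul']

lemma kron_mul (A C : Matrix m m ℂ) (B D : Matrix n n ℂ) :
    (A ⊗ₖ B) * (C ⊗ₖ D) = (A * C) ⊗ₖ (B * D) := (mul_kronecker_mul A C B D).symm

lemma sub_kron (A B : Matrix m m ℂ) (C : Matrix n n ℂ) :
    (A - B) ⊗ₖ C = A ⊗ₖ C - B ⊗ₖ C := by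
  ext ⟨i,j⟩ ⟨k,l⟩; simp [kroneckerMap_apply, sub_mul]

lemma kron_sub (A : Matrix m m ℂ) (B C : Matrix n n ℂ) :
    A ⊗ₖ (B - C) = A ⊗ₖ B - A ⊗ₖ C := by
  ext ⟨i,j⟩ ⟨k,l⟩; simp [kroneckerMap_apply, mul_sub]

lemma psd_kron {A : Matrix m m ℂ} {B : Matrix n n ℂ}
    (hA : A.PosSemidef) (hB : B.PosSemidef) : (A ⊗ₖ B).PosSemidef := by
  exact hA.kronecker hB

lemma psd_smul {M : Matrix m m ℂ} (c : ℝ) (hc : 0 ≤ c) (h : M.PosSemidef) :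
    ((c : ℂ) • M).PosSemidef := by
  rw [posSemidef_iff_dotProduct_mulVec]
  constructor
  · unfold Matrix.IsHermitian
    rw [conjTranspose_smul, h.1.eq]
    congr 1
    simp [Complex.star_def]
  · intro x
    rw [smul_mulVec, dotProduct_smul, smul_eq_mul]
    exact mul_nonneg (by exact_mod_cast Complex.zero_le_real.mpr hc) (h.dotProduct_mulVec_nonneg x)

lemma psd_of_smul {M : Matrix m m ℂ} (c : ℝ) (hc : 0 < c) (h : ((c : ℂ) • M).PosSemidef) :
    M.PosSemidef := by
  have : M = ((c⁻¹ : ℝ) : ℂ) • ((c : ℂ) • M) := by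
    rw [smul_smul]
    norm_cast
    rw [inv_mul_cancel₀ hc.ne', one_smul]
  rw [this]
  exact psd_smul _ (by positivity) h
end helpers

lemma tsirelson_upper
    {nA nB : ℕ}
    (A₀ A₁ : Matrix (Fin nA) (Fin nA) ℂ) (B₀ B₁ : Matrix (Fin nB) (Fin nB) ℂ)
    (hA₀ : A₀.IsHermitian) (hA₁ : A₁.IsHermitian)
    (hB₀ : B₀.IsHermitian) (hB₁ : B₁.IsHermitian)
    (hA₀sq : (1 - A₀ * A₀).PosSemidef) (hA₁sq : (1 - A₁ * A₁).PosSemidef)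
    (hB₀sq : (1 - B₀ * B₀).PosSemidef) (hB₁sq : (1 - B₁ * B₁).PosSemidef) :
    (((2 * Real.sqrt 2 : ℝ) : ℂ) • (1 : Matrix (Fin nA × Fin nB) (Fin nA × Fin nB) ℂ)
        - (A₀ ⊗ₖ B₀ + A₀ ⊗ₖ B₁ + A₁ ⊗ₖ B₀ - A₁ ⊗ₖ B₁)).PosSemidef := by
  set s : ℂ := ((Real.sqrt 2 : ℝ) : ℂ) with hs_def
  have hs : s * s = 2 := by
    rw [hs_def]
    norm_cast
    rw [Real.mul_self_sqrt (by norm_num)]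
  have hstar : star s = s := by rw [hs_def]; simp [Complex.star_def]
  set P : Matrix (Fin nA × Fin nB) (Fin nA × Fin nB) ℂ :=
    s • (A₀ ⊗ₖ (1 : Matrix (Fin nB) (Fin nB) ℂ)) - 1 ⊗ₖ B₀ - 1 ⊗ₖ B₁ with hP_def
  set Q : Matrix (Fin nA × Fin nB) (Fin nA × Fin nB) ℂ :=
    s • (A₁ ⊗ₖ (1 : Matrix (Fin nB) (Fin nB) ℂ)) - 1 ⊗ₖ B₀ + 1 ⊗ₖ B₁ with hQ_def
  have hP : Pᴴ = P := by
    rw [hP_def]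
    simp only [conjTranspose_sub, conjTranspose_add, conjTranspose_smul, kron_conjT,
      conjTranspose_one, hstar, hA₀.eq, hB₀.eq, hB₁.eq]
  have hQ : Qᴴ = Q := by
    rw [hQ_def]
    simp only [conjTranspose_sub, conjTranspose_add, conjTranspose_smul, kron_conjT,
      conjTranspose_one, hstar, hA₁.eq, hB₀.eq, hB₁.eq]
  have key : ((2 : ℂ) * s) • (((2 * Real.sqrt 2 : ℝ) : ℂ) • (1 : Matrix (Fin nA × Fin nB) (Fin nA × Fin nB) ℂ)
        - (A₀ ⊗ₖ B₀ + A₀ ⊗ₖ B₁ + A₁ ⊗ₖ B₀ - A₁ ⊗ₖ B₁)) =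
      ((2:ℝ) : ℂ) • ((1 - A₀ * A₀) ⊗ₖ (1 : Matrix (Fin nB) (Fin nB) ℂ))
      + ((2:ℝ) : ℂ) • ((1 - A₁ * A₁) ⊗ₖ (1 : Matrix (Fin nB) (Fin nB) ℂ))
      + ((2:ℝ) : ℂ) • ((1 : Matrix (Fin nA) (Fin nA) ℂ) ⊗ₖ (1 - B₀ * B₀))
      + ((2:ℝ) : ℂ) • ((1 : Matrix (Fin nA) (Fin nA) ℂ) ⊗ₖ (1 - B₁ * B₁))
      + Pᴴ * P + Qᴴ * Q := by
    rw [hP, hQ, hP_def, hQ_def]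
    have hc : ((2 * Real.sqrt 2 : ℝ) : ℂ) = 2 * s := by push_cast [hs_def]; ring
    rw [hc]
    simp only [sub_kron, kron_sub, Matrix.sub_mul, Matrix.mul_sub, Matrix.add_mul,
      Matrix.mul_add, smul_mul_assoc, Matrix.mul_smul, kron_mul,
      Matrix.mul_one, Matrix.one_mul, ← one_kronecker_one (m := Fin nA) (n := Fin nB) (α := ℂ)]
    push_cast
    have hs2 : s ^ 2 = 2 := by rw [sq, hs]
    match_scalars <;> (ring_nf; try rw [hs2]) <;> ring_nf
  have hRHS : (((2:ℝ) : ℂ) • ((1 - A₀ * A₀) ⊗ₖ (1 : Matrix (Fin nB) (Fin nB) ℂ))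
      + ((2:ℝ) : ℂ) • ((1 - A₁ * A₁) ⊗ₖ (1 : Matrix (Fin nB) (Fin nB) ℂ))
      + ((2:ℝ) : ℂ) • ((1 : Matrix (Fin nA) (Fin nA) ℂ) ⊗ₖ (1 - B₀ * B₀))
      + ((2:ℝ) : ℂ) • ((1 : Matrix (Fin nA) (Fin nA) ℂ) ⊗ₖ (1 - B₁ * B₁))
      + Pᴴ * P + Qᴴ * Q).PosSemidef := by
    refine (((((psd_smul 2 (by norm_num) (psd_kron hA₀sq PosSemidef.one)).add
      (psd_smul 2 (by norm_num) (psd_kron hA₁sq PosSemidef.one))).add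
      (psd_smul 2 (by norm_num) (psd_kron PosSemidef.one hB₀sq))).add
      (psd_smul 2 (by norm_num) (psd_kron PosSemidef.one hB₁sq))).add
      (posSemidef_conjTranspose_mul_self P)).add (posSemidef_conjTranspose_mul_self Q)
  apply psd_of_smul (2 * Real.sqrt 2) (by positivity)
  have hcast : (((2 * Real.sqrt 2 : ℝ)) : ℂ) = (2 : ℂ) * s := by push_cast [hs_def]; ring
  rw [hcast] at key ⊢
  rw [key]
  exact hRHS

lemma kron_neg {m n : Type*} (A : Matrix m m ℂ) (B : Matrix n n ℂ) :
    A ⊗ₖ (-B) = -(A ⊗ₖ B) := by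
  ext ⟨i,j⟩ ⟨k,l⟩; simp [kroneckerMap_apply]

/-- Tsirelson's bound, operator form: if `A₀, A₁, B₀, B₁` are
self-adjoint operators with `Aᵢ² ≤ I`, `Bⱼ² ≤ I`, then
`−2√2·I ≤ A₀⊗B₀ + A₀⊗B₁ + A₁⊗B₀ − A₁⊗B₁ ≤ 2√2·I`. -/
theorem tsirelson_bound_operator
    {nA nB : ℕ}
    (A₀ A₁ : Matrix (Fin nA) (Fin nA) ℂ) (B₀ B₁ : Matrix (Fin nB) (Fin nB) ℂ)
    (hA₀ : A₀.IsHermitian) (hA₁ : A₁.IsHermitian)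
    (hB₀ : B₀.IsHermitian) (hB₁ : B₁.IsHermitian)
    (hA₀sq : (1 - A₀ * A₀).PosSemidef) (hA₁sq : (1 - A₁ * A₁).PosSemidef)
    (hB₀sq : (1 - B₀ * B₀).PosSemidef) (hB₁sq : (1 - B₁ * B₁).PosSemidef) :
    (((2 * Real.sqrt 2 : ℝ) : ℂ) • (1 : Matrix (Fin nA × Fin nB) (Fin nA × Fin nB) ℂ)
        - (A₀ ⊗ₖ B₀ + A₀ ⊗ₖ B₁ + A₁ ⊗ₖ B₀ - A₁ ⊗ₖ B₁)).PosSemidef ∧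
    ((A₀ ⊗ₖ B₀ + A₀ ⊗ₖ B₁ + A₁ ⊗ₖ B₀ - A₁ ⊗ₖ B₁)
        + ((2 * Real.sqrt 2 : ℝ) : ℂ) • (1 : Matrix (Fin nA × Fin nB) (Fin nA × Fin nB) ℂ)).PosSemidef := by
  refine ⟨tsirelson_upper A₀ A₁ B₀ B₁ hA₀ hA₁ hB₀ hB₁ hA₀sq hA₁sq hB₀sq hB₁sq, ?_⟩
  have h := tsirelson_upper A₀ A₁ (-B₀) (-B₁) hA₀ hA₁
    (by simpa using hB₀.neg) (by simpa using hB₁.neg) hA₀sq hA₁sq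
    (by rw [neg_mul_neg]; exact hB₀sq) (by rw [neg_mul_neg]; exact hB₁sq)
  have e : (A₀ ⊗ₖ (-B₀) + A₀ ⊗ₖ (-B₁) + A₁ ⊗ₖ (-B₀) - A₁ ⊗ₖ (-B₁))
      = -(A₀ ⊗ₖ B₀ + A₀ ⊗ₖ B₁ + A₁ ⊗ₖ B₀ - A₁ ⊗ₖ B₁) := by
    simp only [kron_neg]; abel
  rw [e, sub_neg_eq_add, add_comm] at h
  exact h
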